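/- Let ℓ : ℝ → ℝ be differentiable with ℓ'(z) > 0 for all z ∈ ℝ. Let f : ℝ^d × Θ → ℝ be any predictor of the form f(x;θ) = a₀ + ∑_{j=1}^M a_j φ_j(x;θ') (affine in the output-layer weights a₀,a_1,...,a_M). Suppose the dataset (x_i,y_i)_{i=1}^n contains at least one sample with y_i = 1 and at least one with y_i = -1. If θ* is a critical point of the empirical loss L(θ) = (1/n)∑_i ℓ(-y_i f(x_i;θ)) (in particular, the partial derivatives with respect to a₀ and each a_j vanish), then the training error at θ* is strictly positive: there exists i with y_i f(x_i;θ*) ≤ 0. -/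

import Mathlib

/-- For a loss with strictly positive derivative and a predictor affine in the output
layer weights, any critical point (vanishing partial derivatives in the output weights)
has strictly positive training error: some sample has non-positive margin. -/
theorem critical_point_of_positive_derivative_loss_has_error
    (d n M : ℕ)
    (x : Fin n → Fin d → ℝ) (y : Fin n → ℝ) (hy : ∀ i, y i = 1 ∨ y i = -1)
    (hpos : ∃ i, y i = 1) (hneg : ∃ i, y i = -1)
    (ℓ : ℝ → ℝ) (hℓd : Differentiable ℝ ℓ) (hℓ' : ∀ z : ℝ, 0 < deriv ℓ z)
    (φ : Fin M → (Fin d → ℝ) → ℝ) (a0 : ℝ) (a : Fin M → ℝ)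
    (F : Fin n → ℝ) (hF : ∀ i, F i = a0 + ∑ j, a j * φ j (x i))
    (hca0 : ∑ i, deriv ℓ (-(y i) * F i) * y i = 0)
    (hca : ∀ j, ∑ i, deriv ℓ (-(y i) * F i) * y i * φ j (x i) = 0) :
    ∃ i, y i * F i ≤ 0 := by
  by_contra h
  push_neg at h
  set g : Fin n → ℝ := fun i => deriv ℓ (-(y i) * F i) with hg
  have key : ∑ i, g i * (y i * F i) = 0 := by
    have step : ∀ i, g i * (y i * F i)
        = g i * y i * a0 + ∑ j, (g i * y i * φ j (x i)) * a j := by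
      intro i
      simp only [hF, mul_add, Finset.mul_sum]
      exact congrArg₂ (· + ·) (by ring) (Finset.sum_congr rfl (fun j _ => by ring))
    calc ∑ i, g i * (y i * F i)
        = ∑ i, (g i * y i * a0 + ∑ j, (g i * y i * φ j (x i)) * a j) :=
          Finset.sum_congr rfl (fun i _ => step i)
      _ = (∑ i, g i * y i) * a0 + ∑ j, (∑ i, g i * y i * φ j (x i)) * a j := by
          rw [Finset.sum_add_distrib, ← Finset.sum_mul, Finset.sum_comm]
          congr 1
          exact Finset.sum_congr rfl (fun j _ => by rw [Finset.sum_mul])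
      _ = 0 := by rw [hca0, zero_mul, zero_add]
                  simp only [hg, hca, zero_mul, Finset.sum_const_zero]
  obtain ⟨i0, _⟩ := hpos
  have hne : (Finset.univ : Finset (Fin n)).Nonempty := ⟨i0, Finset.mem_univ i0⟩
  have hpos' : 0 < ∑ i, g i * (y i * F i) :=
    Finset.sum_pos (fun i _ => mul_pos (hℓ' _) (h i)) hne
  linarith
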